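/- arXiv:1711.01500 — 3 statements merged into one kernel-verified Lean document; each statement's English description precedes it below -/
import Mathlib

section
/- Let G be a profinite group such that for every open normal subgroup N of G, every Sylow subgroup of the finite group G/N is cyclic. Then the closure of the commutator subgroup [G,G] in G is procyclic, and the quotient of G by this closure is procyclic. -/
/-- A topological group is procyclic if some element topologically generates it, i.e. the
closure of the cyclic subgroup it generates is everything. -/
def IsProcyclic (G : Type*) [Group G] [TopologicalSpace G] : Prop :=
  ∃ g : G, closure ((Subgroup.zpowers g : Subgroup G) : Set G) = Set.univ

instance commutatorTopologicalClosureNormal {G : Type*} [Group G] [TopologicalSpace G]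
    [IsTopologicalGroup G] : ((commutator G).topologicalClosure).Normal :=
  Subgroup.is_normal_topologicalClosure _
open Subgroup
open scoped commutatorElement


section Finite

variable {G : Type*} [Group G]

theorem zgroup_exponent [Finite G] [IsZGroup G] : Monoid.exponent G = Nat.card G := by
  refine Nat.dvd_antisymm Group.exponent_dvd_nat_card ?_
  have hcard : Nat.card G ≠ 0 := Nat.card_pos.ne'
  have hexp : Monoid.exponent G ≠ 0 := Monoid.exponent_ne_zero_of_finite
  rw [← Nat.factorization_le_iff_dvd hcard hexp]
  intro p
  rcases Nat.eq_zero_or_pos ((Nat.card G).factorization p) with h0 | hpos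
  · simp [h0]
  have hp : p.Prime := Nat.prime_of_mem_primeFactors <|
    Nat.support_factorization (n := Nat.card G) ▸ Finsupp.mem_support_iff.mpr hpos.ne'
  have : Fact p.Prime := ⟨hp⟩
  obtain ⟨P⟩ : Nonempty (Sylow p G) := inferInstance
  have hcyc : IsCyclic P := IsZGroup.isZGroup p hp P
  obtain ⟨g, hg⟩ := hcyc.exists_generator
  have hord : orderOf g = Nat.card P := by
    have htop : zpowers g = ⊤ := by
      ext x; simp [hg x]
    rw [← Nat.card_zpowers, htop]
    exact card_top
  have hPcard : Nat.card P = p ^ (Nat.card G).factorization p := P.card_eq_multiplicity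
  have hdvd : p ^ (Nat.card G).factorization p ∣ Monoid.exponent G := by
    rw [← hPcard, ← hord]
    exact (orderOf_submonoid g) ▸ Monoid.order_dvd_exponent (g : G)
  rw [← Nat.Prime.pow_dvd_iff_le_factorization hp hexp]
  exact hdvd

end Finite

theorem zgroup_comm_cyclic {G : Type*} [CommGroup G] [Finite G] [IsZGroup G] : IsCyclic G :=
  IsCyclic.of_exponent_eq_card zgroup_exponent

section Finite

variable {G : Type*} [Group G]

/-- Abelianization of a finite Z-group is cyclic, stated for the bare quotient. -/
theorem zgroup_abelianization_cyclic [Finite G] [IsZGroup G] :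
    IsCyclic (G ⧸ commutator G) := by
  letI : CommGroup (G ⧸ commutator G) :=
    { (inferInstance : Group (G ⧸ _root_.commutator G)) with
      mul_comm := fun a b => by
        induction a using QuotientGroup.induction_on
        induction b using QuotientGroup.induction_on
        rename_i x y
        rw [← QuotientGroup.mk_mul, ← QuotientGroup.mk_mul, QuotientGroup.eq]
        have : (x * y)⁻¹ * (y * x) = ⁅y⁻¹, x⁻¹⁆ := by
          simp [commutatorElement_def]; group
        rw [this, _root_.commutator_def]
        exact commutator_mem_commutator (mem_top _) (mem_top _) }
  have : IsZGroup (G ⧸ commutator G) := inferInstance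
  exact zgroup_comm_cyclic

theorem mulAut_mul_comm {A : Type*} [Group A] [IsCyclic A] (σ τ : MulAut A) :
    σ * τ = τ * σ := by
  obtain ⟨g, hg⟩ := IsCyclic.exists_generator (α := A)
  obtain ⟨m, hm⟩ := hg (σ g)
  obtain ⟨n, hn⟩ := hg (τ g)
  ext x
  obtain ⟨k, hk⟩ := hg x
  subst hk
  simp only [MulAut.mul_apply, map_zpow, ← hm, ← hn, ← zpow_mul]
  ring_nf

end Finite

theorem normalizer_le_centralizer_of_minFac {G : Type*} [Group G] [Finite G] {p : ℕ}
    (hp : p.Prime) (hdvd : p ∣ Nat.card G) (hmin : ∀ q : ℕ, q.Prime → q ∣ Nat.card G → p ≤ q)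
    (P : Sylow p G) (hcyc : IsCyclic P) :
    normalizer (P : Set G) ≤ centralizer (P : Set G) := by
  have : Fact p.Prime := ⟨hp⟩
  set N := normalizer ((P : Subgroup G) : Set G) with hN
  set f := (P : Subgroup G).normalizerMonoidHom with hf
  -- the quotient N ⧸ ker f
  have hker : f.ker = (centralizer (P : Set G)).subgroupOf N :=
    Subgroup.normalizerMonoidHom_ker (H := (P : Subgroup G))
  -- card of quotient divides card of MulAut P
  have h1 : Nat.card (N ⧸ f.ker) ∣ Nat.card (MulAut (P : Subgroup G)) := by
    have e := QuotientGroup.quotientKerEquivRange f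
    rw [Nat.card_congr e.toEquiv]
    exact card_subgroup_dvd_card f.range
  -- card of quotient divides card of G
  have h2 : Nat.card (N ⧸ f.ker) ∣ Nat.card G :=
    (card_quotient_dvd_card f.ker).trans (card_subgroup_dvd_card N)
  -- p does not divide card of quotient
  have hPcomm : IsMulCommutative (P : Subgroup G) :=
    ⟨⟨fun a b => by
      letI := hcyc.commGroup
      exact mul_comm a b⟩⟩
  have hPle : (P : Subgroup G) ≤ centralizer (P : Set G) := le_centralizer _
  have hsub : ((P : Subgroup G).subgroupOf N) ≤ f.ker := by
    rw [hker]
    intro x hx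
    exact mem_subgroupOf.mpr (hPle (mem_subgroupOf.mp hx))
  have h3 : ¬ p ∣ Nat.card (N ⧸ f.ker) := by
    intro hpd
    have : Nat.card (N ⧸ f.ker) = f.ker.index := (index_eq_card f.ker).symm
    rw [this] at hpd
    have hdvdidx : f.ker.index ∣ ((P : Subgroup G).subgroupOf N).index :=
      index_dvd_of_le hsub
    have : ¬ p ∣ ((P : Subgroup G).subgroupOf N).index := by
      have := Sylow.not_dvd_index (P.subtype le_normalizer)
      simp at this
      exact this
    exact this (hpd.trans hdvdidx)
  -- card of MulAut P = totient (p ^ a)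
  have hcP : Nat.card (P : Subgroup G) = p ^ (Nat.card G).factorization p :=
    P.card_eq_multiplicity
  have ha : 0 < (Nat.card G).factorization p :=
    Nat.Prime.factorization_pos_of_dvd hp Nat.card_pos.ne' hdvd
  have hAut : Nat.card (MulAut (P : Subgroup G)) =
      p ^ ((Nat.card G).factorization p - 1) * (p - 1) := by
    rw [IsCyclic.card_mulAut, hcP, Nat.totient_prime_pow hp ha]
  -- conclude quotient is trivial
  have htriv : Nat.card (N ⧸ f.ker) = 1 := by
    by_contra hne
    set m := Nat.card (N ⧸ f.ker) with hm
    have hm0 : m ≠ 0 := Nat.card_pos.ne'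
    set q := m.minFac with hq
    have hqprime : q.Prime := Nat.minFac_prime hne
    have hqm : q ∣ m := Nat.minFac_dvd m
    have hqG : q ∣ Nat.card G := hqm.trans h2
    have hqAut : q ∣ p ^ ((Nat.card G).factorization p - 1) * (p - 1) :=
      hAut ▸ hqm.trans h1
    have hqp : q ≠ p := fun h => h3 (h ▸ hqm)
    have hqp1 : q ∣ p - 1 := by
      rcases (Nat.Prime.dvd_mul hqprime).mp hqAut with h | h
      · exact absurd ((Nat.prime_dvd_prime_iff_eq hqprime hp).mp
          (hqprime.dvd_of_dvd_pow h)) hqp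
      · exact h
    have hp2 : 2 ≤ p := hp.two_le
    have hle1 : p ≤ q := hmin q hqprime hqG
    have hle2 : q ≤ p - 1 := Nat.le_of_dvd (by omega) hqp1
    omega
  have : f.ker = ⊤ := by
    have : f.ker.index = 1 := by rw [index_eq_card, htriv]
    exact index_eq_one.mp this
  rw [hker] at this
  exact subgroupOf_eq_top.mp this

universe u

theorem zgroup_commutator_cyclic_aux :
    ∀ (n : ℕ) (G : Type u) [Group G] [Finite G] [IsZGroup G],
      Nat.card G ≤ n → IsCyclic (commutator G) := by
  intro n
  induction n with
  | zero => intro G _ _ _ hle; exact absurd (Nat.card_pos.trans_le hle) (lt_irrefl 0)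
  | succ n ih =>
    intro G _ _ _ hle
    by_cases hone : Nat.card G = 1
    · have : Subsingleton G := (Nat.card_eq_one_iff_unique.mp hone).1
      infer_instance
    -- setup
    set p := (Nat.card G).minFac with hpdef
    have hp : p.Prime := Nat.minFac_prime hone
    have : Fact p.Prime := ⟨hp⟩
    have hdvd : p ∣ Nat.card G := Nat.minFac_dvd _
    have hmin : ∀ q : ℕ, q.Prime → q ∣ Nat.card G → p ≤ q := fun q hq hdq =>
      Nat.minFac_le_of_dvd hq.two_le hdq
    obtain ⟨P⟩ : Nonempty (Sylow p G) := inferInstance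
    have hcyc : IsCyclic P := IsZGroup.isZGroup p hp P
    have hNC := normalizer_le_centralizer_of_minFac hp hdvd hmin P hcyc
    set K := (MonoidHom.transferSylow P hNC).ker with hK
    -- commutator G ≤ K
    have hcomK : commutator G ≤ K := by
      rw [_root_.commutator_def, commutator_le]
      intro g1 _ g2 _
      rw [MonoidHom.mem_ker, map_commutatorElement]
      refine commutatorElement_eq_one_iff_mul_comm.mpr ?_
      letI := hcyc.commGroup
      exact mul_comm _ _
    -- card K < card G
    have hcompl := MonoidHom.ker_transferSylow_isComplement' P hNC
    have hcardeq : Nat.card K * Nat.card (P : Subgroup G) = Nat.card G := hcompl.card_mul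
    have hPcard : Nat.card (P : Subgroup G) = p ^ (Nat.card G).factorization p :=
      P.card_eq_multiplicity
    have ha : 0 < (Nat.card G).factorization p :=
      Nat.Prime.factorization_pos_of_dvd hp Nat.card_pos.ne' hdvd
    have hPone : 1 < Nat.card (P : Subgroup G) := by
      rw [hPcard]
      exact Nat.one_lt_pow ha.ne' hp.one_lt
    have hKlt : Nat.card K < Nat.card G := by
      have hKpos : 0 < Nat.card K := Nat.card_pos
      calc Nat.card K < Nat.card K * Nat.card (P : Subgroup G) := by
            exact lt_mul_of_one_lt_right hKpos hPone
        _ = Nat.card G := hcardeq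
    -- commutator G is small
    set H := commutator G with hHdef
    have hHlt : Nat.card H ≤ n := by
      have h1 : Nat.card H ≤ Nat.card K := card_le_of_le hcomK
      omega
    -- induction hypothesis: commutator of H is cyclic
    have hG2 : IsCyclic (commutator ↥H) := ih ↥H hHlt
    -- A = [H, H] as a subgroup of G
    set A : Subgroup G := ⁅H, H⁆ with hAdef
    have hmap : (commutator ↥H).map H.subtype = A := by
      rw [_root_.commutator_def, map_commutator]
      congr 1 <;>
        rw [← MonoidHom.range_eq_map, range_subtype]
    have hAcyc : IsCyclic A := by
      rw [← hmap]
      exact isCyclic_of_surjective _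
        (Subgroup.equivMapOfInjective (commutator ↥H) H.subtype H.subtype_injective).surjective
    have hAnormal : A.Normal := Subgroup.commutator_normal H H
    -- conjugation action on A has abelian image
    have hφ : H ≤ (MulAut.conjNormal (G := G) (H := A)).ker := by
      rw [hHdef, _root_.commutator_def, commutator_le]
      intro g1 _ g2 _
      rw [MonoidHom.mem_ker, map_commutatorElement]
      haveI := hAcyc
      exact commutatorElement_eq_one_iff_mul_comm.mpr (mulAut_mul_comm _ _)
    -- commutator of H is central in H
    have hcent : commutator ↥H ≤ Subgroup.center ↥H := by
      intro a ha
      rw [Subgroup.mem_center_iff]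
      intro b
      have haA : (a : G) ∈ A := hmap ▸ ⟨a, ha, rfl⟩
      have hb1 : MulAut.conjNormal (H := A) (b : G) = 1 := hφ b.2
      have := congrArg (fun σ : MulAut A => ((σ ⟨(a : G), haA⟩ : A) : G)) hb1
      simp only [MulAut.conjNormal_apply, MulAut.one_apply] at this
      have hconj : (b : G) * (a : G) * (b : G)⁻¹ = (a : G) := this
      refine Subtype.ext ?_
      show (b : G) * (a : G) = (a : G) * (b : G)
      calc (b : G) * a = ((b : G) * a * (b : G)⁻¹) * b := by group
        _ = (a : G) * b := by rw [hconj]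
    -- H is commutative
    haveI hq : IsCyclic (↥H ⧸ commutator ↥H) := zgroup_abelianization_cyclic
    letI : CommGroup ↥H := commGroupOfCyclicCenterQuotient
      (QuotientGroup.mk' (commutator ↥H))
      (by rw [QuotientGroup.ker_mk']; exact hcent)
    exact zgroup_comm_cyclic

theorem zgroup_commutator_cyclic (G : Type u) [Group G] [Finite G] [IsZGroup G] :
    IsCyclic (commutator G) :=
  zgroup_commutator_cyclic_aux (Nat.card G) G le_rfl

section Profinite

/-- In a profinite group, every neighborhood of 1 contains an open normal subgroup. -/
theorem exists_openNormal_subset {G : Type*} [Group G] [TopologicalSpace G] [IsTopologicalGroup G]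
    [CompactSpace G] [T2Space G] [TotallyDisconnectedSpace G] {U : Set G} (hU : U ∈ nhds 1) :
    ∃ N : Subgroup G, N.Normal ∧ IsOpen (N : Set G) ∧ (N : Set G) ⊆ U := by
  obtain ⟨W, ⟨h1W, hWclopen⟩, hWU⟩ := (nhds_basis_clopen (1 : G)).mem_iff.mp hU
  obtain ⟨H, hH⟩ := IsTopologicalGroup.exist_openNormalSubgroup_sub_clopen_nhds_of_one hWclopen h1W
  exact ⟨H.toSubgroup, H.isNormal', H.toOpenSubgroup.isOpen, fun x hx => hWU (hH hx)⟩

theorem gen_of_cyclic_quotient {H : Type*} [Group H] (N : Subgroup H) [N.Normal]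
    (h : IsCyclic (H ⧸ N)) : ∃ g : H, ∀ y : H, ∃ k : ℤ, (g ^ k)⁻¹ * y ∈ N := by
  obtain ⟨c, hc⟩ := h.exists_generator
  obtain ⟨g, rfl⟩ := QuotientGroup.mk_surjective c
  refine ⟨g, fun y => ?_⟩
  obtain ⟨k, hk⟩ := hc (QuotientGroup.mk y)
  refine ⟨k, ?_⟩
  rw [← QuotientGroup.eq, QuotientGroup.mk_zpow]
  exact hk

/-- Procyclicity criterion by compactness. -/
theorem isProcyclic_of_quotients {H : Type*} [Group H] [TopologicalSpace H] [IsTopologicalGroup H]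
    [CompactSpace H]
    (hx : ∀ U ∈ nhds (1 : H), ∃ N : Subgroup H, N.Normal ∧ IsOpen (N : Set H) ∧ (N : Set H) ⊆ U ∧
      ∃ g : H, ∀ y : H, ∃ k : ℤ, (g ^ k)⁻¹ * y ∈ N) :
    IsProcyclic H := by
  classical
  let ι := {N : Subgroup H // N.Normal ∧ IsOpen (N : Set H) ∧
    ∃ g : H, ∀ y : H, ∃ k : ℤ, (g ^ k)⁻¹ * y ∈ N}
  have hι : Nonempty ι := by
    obtain ⟨N, h1, h2, _, h4⟩ := hx Set.univ Filter.univ_mem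
    exact ⟨⟨N, h1, h2, h4⟩⟩
  let T : ι → Set H := fun i => {g : H | ∀ y : H, ∃ k : ℤ, (g ^ k)⁻¹ * y ∈ i.1}
  -- membership in T only depends on the coset
  have hcoset : ∀ (i : ι) (g n : H), n ∈ i.1 → g ∈ T i → g * n ∈ T i := by
    intro i g n hn hg y
    haveI := i.2.1
    obtain ⟨k, hk⟩ := hg y
    refine ⟨k, ?_⟩
    have : QuotientGroup.mk (s := i.1) (g * n) = QuotientGroup.mk g := by
      rw [QuotientGroup.eq]
      simpa using i.1.inv_mem hn
    have h2 : QuotientGroup.mk (s := i.1) ((g * n) ^ k) = QuotientGroup.mk (g ^ k) := by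
      rw [QuotientGroup.mk_zpow, QuotientGroup.mk_zpow, this]
    rw [← QuotientGroup.eq] at hk ⊢
    rw [QuotientGroup.mk_zpow] at hk ⊢
    rw [this]
    exact hk
  have hTclosed : ∀ i, IsClosed (T i) := by
    intro i
    rw [← isOpen_compl_iff, isOpen_iff_forall_mem_open]
    intro g hg
    refine ⟨(fun x => g⁻¹ * x) ⁻¹' i.1, ?_, (i.2.2.1.preimage (continuous_mul_left g⁻¹)),
      by simpa using i.1.one_mem⟩
    intro x hxc hxT
    apply hg
    have hx' : x = g * (g⁻¹ * x) := by group
    have : g ∈ T i := by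
      have := hcoset i x (x⁻¹ * g) ?_ hxT
      · simpa using this
      · have : x⁻¹ * g = (g⁻¹ * x)⁻¹ := by group
        rw [this]
        exact i.1.inv_mem hxc
    exact this
  have hTnonempty : ∀ i, (T i).Nonempty := fun i => i.2.2.2
  have hTdirected : Directed (· ⊇ ·) T := by
    intro i j
    have hUopen : IsOpen ((i.1 ⊓ j.1 : Subgroup H) : Set H) := by
      rw [Subgroup.coe_inf]
      exact i.2.2.1.inter j.2.2.1
    have hUmem : ((i.1 ⊓ j.1 : Subgroup H) : Set H) ∈ nhds (1 : H) :=
      hUopen.mem_nhds (by simpa using (⟨i.1.one_mem, j.1.one_mem⟩ : (1:H) ∈ i.1 ∧ (1:H) ∈ j.1))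
    obtain ⟨N, h1, h2, h3, h4⟩ := hx _ hUmem
    refine ⟨⟨N, h1, h2, h4⟩, fun g hg y => ?_, fun g hg y => ?_⟩
    · obtain ⟨k, hk⟩ := hg y
      exact ⟨k, ((Subgroup.mem_inf).mp (h3 hk)).1⟩
    · obtain ⟨k, hk⟩ := hg y
      exact ⟨k, ((Subgroup.mem_inf).mp (h3 hk)).2⟩
  obtain ⟨g, hg⟩ := IsCompact.nonempty_iInter_of_directed_nonempty_isCompact_isClosed T
    hTdirected hTnonempty (fun i => (hTclosed i).isCompact) hTclosed
  refine ⟨g, Set.eq_univ_of_forall fun x => ?_⟩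
  rw [mem_closure_iff]
  intro U hUopen hxU
  have hV : (fun y => x * y) ⁻¹' U ∈ nhds (1 : H) := by
    refine (hUopen.preimage (continuous_mul_left x)).mem_nhds ?_
    simpa using hxU
  obtain ⟨N, h1, h2, h3, g0, hg0⟩ := hx _ hV
  have hgi : g ∈ T ⟨N, h1, h2, g0, hg0⟩ := Set.mem_iInter.mp hg _
  obtain ⟨k, hk⟩ := hgi x
  refine ⟨g ^ k, ?_, ⟨k, rfl⟩⟩
  have h5 : x * ((g ^ k)⁻¹ * x)⁻¹ = g ^ k := by group
  have h6 := h3 (N.inv_mem hk)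
  rw [Set.mem_preimage, h5] at h6
  exact h6

end Profinite

/-- If all Sylow subgroups of all the (finite) continuous quotients of a profinite group `G`
are cyclic, then the closure of the commutator subgroup of `G` is procyclic and the quotient
of `G` by it is procyclic. -/
theorem procyclic_commutator_closure_of_cyclic_sylows
    (G : Type) [Group G] [TopologicalSpace G] [IsTopologicalGroup G]
    [CompactSpace G] [T2Space G] [TotallyDisconnectedSpace G]
    (h : ∀ (N : Subgroup G) [N.Normal], IsOpen (N : Set G) →
      ∀ (p : ℕ) [Fact p.Prime], ∀ P : Sylow p (G ⧸ N), IsCyclic (P : Subgroup (G ⧸ N))) :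
    IsProcyclic ((commutator G).topologicalClosure) ∧
      IsProcyclic (G ⧸ (commutator G).topologicalClosure) := by
  set Hc : Subgroup G := (commutator G).topologicalClosure with hHcdef
  have hHcClosed : IsClosed (Hc : Set G) := Subgroup.isClosed_topologicalClosure _
  haveI : CompactSpace Hc := isCompact_iff_compactSpace.mp hHcClosed.isCompact
  constructor
  · -- the closure of the commutator subgroup is procyclic
    apply isProcyclic_of_quotients
    intro U hU
    rw [nhds_subtype_eq_comap, Filter.mem_comap] at hU
    obtain ⟨U', hU', hU'sub⟩ := hU
    obtain ⟨Ng, hNnorm, hNopen, hNsub⟩ := exists_openNormal_subset hU'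
    haveI := hNnorm
    refine ⟨Ng.subgroupOf Hc, inferInstance, Subgroup.subgroupOf_isOpen Hc Ng hNopen, ?_, ?_⟩
    · intro x hx
      exact hU'sub (hNsub hx)
    · -- cyclic quotient
      haveI : Finite (G ⧸ Ng) := Ng.quotient_finite_of_isOpen hNopen
      haveI : IsZGroup (G ⧸ Ng) := ⟨fun p hp P => @h Ng hNnorm hNopen p ⟨hp⟩ P⟩
      have hcyc : IsCyclic (commutator (G ⧸ Ng)) := zgroup_commutator_cyclic _
      set π := QuotientGroup.mk' Ng with hπdef
      have hCmap : Subgroup.map π (commutator G) = commutator (G ⧸ Ng) := by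
        rw [_root_.commutator_def, _root_.commutator_def, Subgroup.map_commutator,
          Subgroup.map_top_of_surjective _ (QuotientGroup.mk'_surjective Ng)]
      have hker : Ng ≤ (commutator (G ⧸ Ng)).comap π := by
        intro x hx
        rw [Subgroup.mem_comap]
        have : π x = 1 := (QuotientGroup.eq_one_iff x).mpr hx
        rw [this]
        exact Subgroup.one_mem _
      have hclosed2 : IsClosed (((commutator (G ⧸ Ng)).comap π : Subgroup G) : Set G) :=
        Subgroup.isClosed_of_isOpen _ (Subgroup.isOpen_mono hker hNopen)
      have hle : Hc ≤ (commutator (G ⧸ Ng)).comap π :=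
        Subgroup.topologicalClosure_minimal _
          (hCmap ▸ Subgroup.le_comap_map π (commutator G)) hclosed2
      have hmapHc : Subgroup.map π Hc = commutator (G ⧸ Ng) :=
        le_antisymm (Subgroup.map_le_iff_le_comap.mpr hle)
          (hCmap ▸ Subgroup.map_mono (Subgroup.le_topologicalClosure _))
      set φ : ↥Hc →* G ⧸ Ng := π.comp Hc.subtype with hφdef
      have hφker : φ.ker = Ng.subgroupOf Hc := by
        ext x
        rw [MonoidHom.mem_ker, Subgroup.mem_subgroupOf, hφdef, MonoidHom.comp_apply,
          Subgroup.coe_subtype, QuotientGroup.mk'_apply, QuotientGroup.eq_one_iff]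
      have hφrange : φ.range = Subgroup.map π Hc := by
        rw [hφdef, MonoidHom.range_comp, Subgroup.range_subtype]
      have hcyc2 : IsCyclic (↥Hc ⧸ Ng.subgroupOf Hc) := by
        haveI : IsCyclic φ.range := by rw [hφrange, hmapHc]; exact hcyc
        have e := (QuotientGroup.quotientKerEquivRange φ).symm.trans
          (QuotientGroup.quotientMulEquivOfEq hφker)
        exact isCyclic_of_surjective e e.surjective
      exact gen_of_cyclic_quotient _ hcyc2
  · -- the quotient is procyclic
    apply isProcyclic_of_quotients
    intro U hU
    have hV : (QuotientGroup.mk : G → G ⧸ Hc) ⁻¹' U ∈ nhds (1 : G) := by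
      refine (QuotientGroup.continuous_mk).continuousAt.preimage_mem_nhds ?_
      exact hU
    obtain ⟨Ng, hNnorm, hNopen, hNsub⟩ := exists_openNormal_subset hV
    haveI := hNnorm
    set N : Subgroup (G ⧸ Hc) := Subgroup.map (QuotientGroup.mk' Hc) Ng with hNdef
    haveI hNnorm2 : N.Normal := hNnorm.map _ (QuotientGroup.mk'_surjective _)
    refine ⟨N, hNnorm2, ?_, ?_, ?_⟩
    · rw [hNdef, Subgroup.coe_map]
      exact QuotientGroup.isOpenMap_coe _ hNopen
    · rw [hNdef, Subgroup.coe_map]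
      exact (Set.image_mono hNsub).trans (Set.image_preimage_subset _ _)
    · -- cyclic quotient
      haveI : Finite (G ⧸ Ng) := Ng.quotient_finite_of_isOpen hNopen
      haveI : IsZGroup (G ⧸ Ng) := ⟨fun p hp P => @h Ng hNnorm hNopen p ⟨hp⟩ P⟩
      have hDab : IsCyclic ((G ⧸ Ng) ⧸ commutator (G ⧸ Ng)) := zgroup_abelianization_cyclic
      set ψ : G →* (G ⧸ Hc) ⧸ N := (QuotientGroup.mk' N).comp (QuotientGroup.mk' Hc) with hψdef
      have hψsurj : Function.Surjective ψ :=
        (QuotientGroup.mk'_surjective N).comp (QuotientGroup.mk'_surjective Hc)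
      have hNgker : Ng ≤ ψ.ker := by
        intro x hx
        rw [MonoidHom.mem_ker, hψdef, MonoidHom.comp_apply, QuotientGroup.mk'_apply,
          QuotientGroup.eq_one_iff]
        exact Subgroup.mem_map_of_mem _ hx
      set χ₁ : (G ⧸ Ng) →* (G ⧸ Hc) ⧸ N := QuotientGroup.lift Ng ψ hNgker with hχ₁def
      have hχ₁mk : ∀ x : G, χ₁ (QuotientGroup.mk x) = ψ x := fun x => rfl
      have hχ₁surj : Function.Surjective χ₁ := by
        intro q
        obtain ⟨x, hx⟩ := hψsurj q
        exact ⟨QuotientGroup.mk x, by rw [hχ₁mk, hx]⟩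
      have hker2 : commutator (G ⧸ Ng) ≤ χ₁.ker := by
        rw [_root_.commutator_def, Subgroup.commutator_le]
        intro d1 _ d2 _
        obtain ⟨x1, rfl⟩ := QuotientGroup.mk_surjective d1
        obtain ⟨x2, rfl⟩ := QuotientGroup.mk_surjective d2
        have hmk : (⁅(QuotientGroup.mk x1 : G ⧸ Ng), QuotientGroup.mk x2⁆ : G ⧸ Ng) =
            QuotientGroup.mk ⁅x1, x2⁆ :=
          (map_commutatorElement (QuotientGroup.mk' Ng) x1 x2).symm
        rw [MonoidHom.mem_ker, hmk, hχ₁mk]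
        have hmem : ⁅x1, x2⁆ ∈ Hc := Subgroup.le_topologicalClosure _
          (by rw [_root_.commutator_def]
              exact Subgroup.commutator_mem_commutator (Subgroup.mem_top _) (Subgroup.mem_top _))
        have h9 : (QuotientGroup.mk' Hc) ⁅x1, x2⁆ = 1 :=
          (QuotientGroup.eq_one_iff _).mpr hmem
        rw [hψdef, MonoidHom.comp_apply, h9]
        exact map_one _
      set χ₂ : ((G ⧸ Ng) ⧸ commutator (G ⧸ Ng)) →* (G ⧸ Hc) ⧸ N :=
        QuotientGroup.lift _ χ₁ hker2 with hχ₂def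
      have hχ₂surj : Function.Surjective χ₂ := by
        intro q
        obtain ⟨d, hd⟩ := hχ₁surj q
        exact ⟨QuotientGroup.mk d, hd⟩
      have hcyc2 : IsCyclic ((G ⧸ Hc) ⧸ N) := isCyclic_of_surjective χ₂ hχ₂surj
      exact gen_of_cyclic_quotient _ hcyc2
end

section
/- Let G be a profinite group such that for every open normal subgroup N of G, the finite group G/N is nilpotent and all of its Sylow subgroups are cyclic. Then G is procyclic. -/
/-- A finite nilpotent group with all Sylow subgroups cyclic is cyclic. -/
theorem aux_isCyclic_of_nilpotent_cyclic_sylows (H : Type*) [Group H] [Finite H]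
    (hn : Group.IsNilpotent H)
    (hs : ∀ (p : ℕ) [Fact p.Prime], ∀ P : Sylow p H, IsCyclic (P : Subgroup H)) :
    IsCyclic H := by
  obtain ⟨e⟩ := ((isNilpotent_of_finite_tfae (G := H)).out 0 4).mp hn
  have comm : ∀ a b : H, a * b = b * a := by
    intro a b
    obtain ⟨x, rfl⟩ := e.surjective a
    obtain ⟨y, rfl⟩ := e.surjective b
    rw [← map_mul, ← map_mul]
    congr 1
    funext p P
    haveI : Fact (p : ℕ).Prime := ⟨Nat.prime_of_mem_primeFactors p.2⟩
    letI := (hs p P).commGroup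
    exact mul_comm _ _
  letI : CommGroup H := { ‹Group H› with mul_comm := comm }
  apply IsCyclic.of_exponent_eq_card
  refine Nat.dvd_antisymm Group.exponent_dvd_nat_card ?_
  have hcard : Nat.card H ≠ 0 := Nat.card_pos.ne'
  rw [← Nat.factorization_le_iff_dvd hcard Monoid.exponent_ne_zero_of_finite, Finsupp.le_def]
  intro p
  rcases eq_or_ne ((Nat.card H).factorization p) 0 with h0 | h0
  · simp [h0]
  have hp : p.Prime := Nat.prime_of_mem_primeFactors
    (Nat.support_factorization (Nat.card H) ▸ Finsupp.mem_support_iff.mpr h0)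
  haveI : Fact p.Prime := ⟨hp⟩
  obtain ⟨P⟩ : Nonempty (Sylow p H) := inferInstance
  obtain ⟨g, hg⟩ := (hs p P).exists_generator
  have horder : orderOf (g : H) = p ^ (Nat.card H).factorization p := by
    rw [Subgroup.orderOf_coe, orderOf_eq_card_of_forall_mem_zpowers hg,
      P.card_eq_multiplicity]
  have hdvd : p ^ (Nat.card H).factorization p ∣ Monoid.exponent H := by
    rw [← horder]; exact Monoid.order_dvd_exponent (g : H)
  exact (Nat.Prime.pow_dvd_iff_le_factorization hp Monoid.exponent_ne_zero_of_finite).mp hdvd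

/-- The set of elements of `G` that generate the quotient `G ⧸ N`. -/
def genSet (G : Type*) [Group G] (N : Subgroup G) [N.Normal] : Set G :=
  (QuotientGroup.mk : G → G ⧸ N) ⁻¹' {x | Subgroup.zpowers x = ⊤}

theorem genSet_isClopen {G : Type*} [Group G] [TopologicalSpace G] [IsTopologicalGroup G]
    (N : Subgroup G) [N.Normal] (hN : IsOpen (N : Set G)) : IsClopen (genSet G N) := by
  haveI : DiscreteTopology (G ⧸ N) := QuotientGroup.discreteTopology hN
  have hcont : Continuous (QuotientGroup.mk : G → G ⧸ N) := continuous_quot_mk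
  exact ⟨(isClosed_discrete _).preimage hcont, (isOpen_discrete _).preimage hcont⟩

theorem genSet_mono {G : Type*} [Group G] {M N : Subgroup G} [M.Normal] [N.Normal]
    (hMN : M ≤ N) : genSet G M ⊆ genSet G N := by
  intro g hg
  set φ : G ⧸ M →* G ⧸ N := QuotientGroup.map M N (MonoidHom.id G)
    hMN with hφ
  have hsurj : Function.Surjective φ := by
    intro y
    obtain ⟨x, rfl⟩ := QuotientGroup.mk_surjective y
    exact ⟨QuotientGroup.mk x, rfl⟩
  have key := congrArg (Subgroup.map φ) hg
  rw [MonoidHom.map_zpowers, Subgroup.map_top_of_surjective _ hsurj, hφ] at key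
  exact key

/-- A profinite group all of whose (finite) continuous quotients are nilpotent with cyclic
Sylow subgroups is procyclic. -/
theorem procyclic_of_nilpotent_quotients_with_cyclic_sylows
    (G : Type) [Group G] [TopologicalSpace G] [IsTopologicalGroup G]
    [CompactSpace G] [T2Space G] [TotallyDisconnectedSpace G]
    (h : ∀ (N : Subgroup G) [N.Normal], IsOpen (N : Set G) →
      Group.IsNilpotent (G ⧸ N) ∧
      ∀ (p : ℕ) [Fact p.Prime], ∀ P : Sylow p (G ⧸ N), IsCyclic (P : Subgroup (G ⧸ N))) :
    IsProcyclic G := by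
  classical
  let ι := {N : Subgroup G // N.Normal ∧ IsOpen (N : Set G)}
  haveI : Nonempty ι := ⟨⟨⊤, inferInstance, by rw [Subgroup.coe_top]; exact isOpen_univ⟩⟩
  let S : ι → Set G := fun i => @genSet G _ i.1 i.2.1
  have hclopen : ∀ i : ι, IsClopen (S i) := fun i => by
    haveI := i.2.1
    exact genSet_isClopen i.1 i.2.2
  have hne : ∀ i : ι, (S i).Nonempty := fun i => by
    haveI := i.2.1
    haveI : Finite (G ⧸ i.1) := Subgroup.quotient_finite_of_isOpen i.1 i.2.2
    obtain ⟨hnil, hsyl⟩ := h i.1 i.2.2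
    haveI : IsCyclic (G ⧸ i.1) := aux_isCyclic_of_nilpotent_cyclic_sylows _ hnil hsyl
    obtain ⟨x, hx⟩ := IsCyclic.exists_generator (α := G ⧸ i.1)
    obtain ⟨g, rfl⟩ := QuotientGroup.mk_surjective x
    exact ⟨g, (Subgroup.zpowers _).eq_top_iff'.mpr hx⟩
  have hdir : Directed (· ⊇ ·) S := by
    intro i j
    haveI := i.2.1; haveI := j.2.1
    refine ⟨⟨i.1 ⊓ j.1, inferInstance, ?_⟩, ?_, ?_⟩
    · have : ((i.1 ⊓ j.1 : Subgroup G) : Set G) = (i.1 : Set G) ∩ (j.1 : Set G) := rfl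
      rw [this]; exact i.2.2.inter j.2.2
    · exact genSet_mono inf_le_left
    · exact genSet_mono inf_le_right
  obtain ⟨g, hg⟩ := IsCompact.nonempty_iInter_of_directed_nonempty_isCompact_isClosed
    S hdir hne (fun i => (hclopen i).1.isCompact) (fun i => (hclopen i).1)
  refine ⟨g, Set.eq_univ_iff_forall.mpr fun x => ?_⟩
  rw [mem_closure_iff]
  intro U hU hxU
  have hW : IsOpen ((fun y => x * y) ⁻¹' U) := hU.preimage (continuous_mul_left x)
  have h1W : (1 : G) ∈ (fun y => x * y) ⁻¹' U := by simpa using hxU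
  obtain ⟨C, hC, h1C, hCW⟩ := compact_exists_isClopen_in_isOpen hW h1W
  obtain ⟨H, hHC⟩ := IsTopologicalGroup.exist_openNormalSubgroup_sub_clopen_nhds_of_one hC h1C
  haveI : H.toSubgroup.Normal := H.isNormal'
  set i : ι := ⟨H.toSubgroup, H.isNormal', H.toOpenSubgroup.isOpen⟩ with hi
  have hgi : g ∈ S i := Set.mem_iInter.mp hg i
  have hx' : (QuotientGroup.mk x : G ⧸ H.toSubgroup) ∈
      Subgroup.zpowers (QuotientGroup.mk g : G ⧸ H.toSubgroup) := by
    have := (Subgroup.zpowers (QuotientGroup.mk g : G ⧸ H.toSubgroup)).eq_top_iff'.mp hgi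
    exact this _
  obtain ⟨n, hn⟩ := Subgroup.mem_zpowers_iff.mp hx'
  have hmk : (QuotientGroup.mk (g ^ n) : G ⧸ H.toSubgroup) = QuotientGroup.mk x := by
    rw [QuotientGroup.mk_zpow]; exact hn
  have hmem : x⁻¹ * g ^ n ∈ H.toSubgroup := QuotientGroup.eq.mp hmk.symm
  have hgU : g ^ n ∈ U := by
    have : x⁻¹ * g ^ n ∈ (fun y => x * y) ⁻¹' U := hCW (hHC hmem)
    simpa using this
  exact ⟨g ^ n, hgU, Subgroup.mem_zpowers_iff.mpr ⟨n, rfl⟩⟩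
end

section
/- Let N be a group, N' a subgroup of N, q ≥ 1 an integer, and M a finite abelian group regarded as a trivial module over both N and N'. Assume that the integral homology groups H_q(N, ℤ), H_{q−1}(N, ℤ), H_q(N', ℤ), and H_{q−1}(N', ℤ) are finitely generated abelian groups. If the restriction map H^q(N, M) → H^q(N', M) on group cohomology is the zero map, then the map H_q(N', M) → H_q(N, M) on group homology induced by the inclusion N' ⊆ N is the zero map. -/
/-- The group structure on `AddAut M` (composition) that older Mathlib provided as
`AddAut.group`; current Mathlib only gives `AddAut M` an additive group structure. -/
instance AddAut.group (A : Type*) [Add A] : Group (AddAut A) where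
  mul g h := AddEquiv.trans h g
  one := AddEquiv.refl _
  inv := AddEquiv.symm
  mul_assoc _ _ _ := rfl
  one_mul _ := rfl
  mul_one _ := rfl
  inv_mul_cancel := AddEquiv.self_trans_symm

section HomogeneousResolution

variable {G G' : Type} [Group G] [Group G'] {M : Type} [AddCommGroup M]

/-! ### Cochains -/

/-- The differential on homogeneous cochains. -/
def cochainD (G : Type) [Group G] (M : Type) [AddCommGroup M] (q : ℕ) :
    ((Fin (q + 1) → G) → M) →+ ((Fin (q + 2) → G) → M) where
  toFun f g := ∑ i : Fin (q + 2), (-1 : ℤ) ^ (i : ℕ) • f (g ∘ i.succAbove)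
  map_zero' := by funext g; simp
  map_add' a b := by
    funext g
    simp [smul_add, Finset.sum_add_distrib]

/-- Homogeneous equivariant cochains. -/
def eqCochain (ρ : G →* AddAut M) (q : ℕ) : AddSubgroup ((Fin (q + 1) → G) → M) where
  carrier := {f | ∀ (n : G) (g : Fin (q + 1) → G), f (fun i => n * g i) = ρ n (f g)}
  zero_mem' := by intro n g; simp
  add_mem' := by intro a b ha hb n g; simp [ha n g, hb n g]
  neg_mem' := by intro a ha n g; simp [ha n g]

/-- Cocycles: equivariant cochains killed by the differential. -/
def cocycles (ρ : G →* AddAut M) (q : ℕ) : AddSubgroup ((Fin (q + 1) → G) → M) :=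
  eqCochain ρ q ⊓ (cochainD G M q).ker

/-- Coboundaries: differentials of equivariant cochains (interpreted as `⊥` in degree 0). -/
def coboundaries (ρ : G →* AddAut M) : (q : ℕ) → AddSubgroup ((Fin (q + 1) → G) → M)
  | 0 => ⊥
  | (n + 1) => (eqCochain ρ n).map (cochainD G M n)

/-- The `q`-th group cohomology of `G` with coefficients in `M`, the action being given by
`ρ : G →* AddAut M`; defined via the homogeneous cochain complex. -/
def GroupCohomology (ρ : G →* AddAut M) (q : ℕ) : Type :=
  cocycles ρ q ⧸ ((coboundaries ρ q ⊓ cocycles ρ q).addSubgroupOf (cocycles ρ q))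

noncomputable instance (ρ : G →* AddAut M) (q : ℕ) : AddCommGroup (GroupCohomology ρ q) := by
  unfold GroupCohomology; infer_instance

/-- Precomposition of cochains with a group homomorphism. -/
def cochainRes (φ : G' →* G) (M : Type) [AddCommGroup M] (q : ℕ) :
    ((Fin (q + 1) → G) → M) →+ ((Fin (q + 1) → G') → M) where
  toFun f g := f fun i => φ (g i)
  map_zero' := rfl
  map_add' a b := rfl

theorem cochainRes_comm_d (φ : G' →* G) (q : ℕ) (f : (Fin (q + 1) → G) → M) :
    cochainRes φ M (q + 1) (cochainD G M q f) = cochainD G' M q (cochainRes φ M q f) := rfl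

theorem cochainRes_mem_eqCochain (φ : G' →* G) (ρ : G →* AddAut M) (ρ' : G' →* AddAut M)
    (hcomp : ∀ x, ρ' x = ρ (φ x)) (q : ℕ) (f : (Fin (q + 1) → G) → M)
    (hf : f ∈ eqCochain ρ q) : cochainRes φ M q f ∈ eqCochain ρ' q := by
  intro n g
  have := hf (φ n) (fun i => φ (g i))
  simpa [cochainRes, hcomp, map_mul] using this

theorem cochainRes_mem_cocycles (φ : G' →* G) (ρ : G →* AddAut M) (ρ' : G' →* AddAut M)
    (hcomp : ∀ x, ρ' x = ρ (φ x)) (q : ℕ) (f : (Fin (q + 1) → G) → M)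
    (hf : f ∈ cocycles ρ q) : cochainRes φ M q f ∈ cocycles ρ' q := by
  constructor
  · exact cochainRes_mem_eqCochain φ ρ ρ' hcomp q f hf.1
  · show cochainD G' M q (cochainRes φ M q f) = 0
    rw [← cochainRes_comm_d]
    have : cochainD G M q f = 0 := hf.2
    rw [this]
    rfl

/-- Cocycle-level restriction. -/
def cocycleRes (φ : G' →* G) (ρ : G →* AddAut M) (ρ' : G' →* AddAut M)
    (hcomp : ∀ x, ρ' x = ρ (φ x)) (q : ℕ) : cocycles ρ q →+ cocycles ρ' q :=
  AddMonoidHom.codRestrict ((cochainRes φ M q).comp (cocycles ρ q).subtype) _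
    (fun f => cochainRes_mem_cocycles φ ρ ρ' hcomp q f f.2)

theorem cochainRes_mem_coboundaries (φ : G' →* G) (ρ : G →* AddAut M) (ρ' : G' →* AddAut M)
    (hcomp : ∀ x, ρ' x = ρ (φ x)) (q : ℕ) (f : (Fin (q + 1) → G) → M)
    (hf : f ∈ coboundaries ρ q) : cochainRes φ M q f ∈ coboundaries ρ' q := by
  match q with
  | 0 =>
    have : f = 0 := hf
    subst this
    show cochainRes φ M 0 0 ∈ (⊥ : AddSubgroup _)
    simp [map_zero]
  | (n + 1) =>
    obtain ⟨u, hu, rfl⟩ := hf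
    exact ⟨cochainRes φ M n u, cochainRes_mem_eqCochain φ ρ ρ' hcomp n u hu,
      (cochainRes_comm_d φ n u).symm⟩

/-- The restriction map in group cohomology along a homomorphism `φ : G' →* G`,
for compatible actions. -/
noncomputable def cohomologyRes (φ : G' →* G) (ρ : G →* AddAut M) (ρ' : G' →* AddAut M)
    (hcomp : ∀ x, ρ' x = ρ (φ x)) (q : ℕ) :
    GroupCohomology ρ q →+ GroupCohomology ρ' q :=
  QuotientAddGroup.map _ _ (cocycleRes φ ρ ρ' hcomp q) (by
    intro x hx
    have h1 : (x : (Fin (q + 1) → G) → M) ∈ coboundaries ρ q ⊓ cocycles ρ q := hx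
    refine ⟨cochainRes_mem_coboundaries φ ρ ρ' hcomp q _ h1.1, ?_⟩
    exact (cocycleRes φ ρ ρ' hcomp q x).2)

/-! ### Chains and homology -/

/-- The boundary map on homogeneous chains. -/
noncomputable def chainB (G : Type) [Group G] (M : Type) [AddCommGroup M] (q : ℕ) :
    ((Fin (q + 2) → G) →₀ M) →+ ((Fin (q + 1) → G) →₀ M) :=
  ∑ i : Fin (q + 2), (-1 : ℤ) ^ (i : ℕ) •
    (Finsupp.mapDomain.addMonoidHom fun g : Fin (q + 2) → G => g ∘ i.succAbove)

/-- The diagonal action of `G` on homogeneous chains. -/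
noncomputable def chainAct (ρ : G →* AddAut M) (q : ℕ) (n : G) :
    ((Fin (q + 1) → G) →₀ M) →+ ((Fin (q + 1) → G) →₀ M) :=
  (Finsupp.mapDomain.addMonoidHom fun g : Fin (q + 1) → G => fun i => n * g i).comp
    (Finsupp.mapRange.addMonoidHom (ρ n).toAddMonoidHom)

/-- The subgroup of chains by which we quotient to obtain coinvariants. -/
noncomputable def coinvRel (ρ : G →* AddAut M) (q : ℕ) :
    AddSubgroup ((Fin (q + 1) → G) →₀ M) :=
  AddSubgroup.closure
    {y | ∃ (n : G) (x : (Fin (q + 1) → G) →₀ M), y = x - chainAct ρ q n x}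

/-- Coinvariants of the homogeneous chains. -/
def CoinvChain (ρ : G →* AddAut M) (q : ℕ) : Type :=
  ((Fin (q + 1) → G) →₀ M) ⧸ coinvRel ρ q

noncomputable instance (ρ : G →* AddAut M) (q : ℕ) : AddCommGroup (CoinvChain ρ q) := by
  unfold CoinvChain; infer_instance

theorem chainB_comm_act (ρ : G →* AddAut M) (q : ℕ) (n : G) :
    (chainB G M q).comp (chainAct ρ (q + 1) n) = (chainAct ρ q n).comp (chainB G M q) := by
  ext g m
  simp [chainB, chainAct, Finsupp.mapDomain_single, AddMonoidHom.finset_sum_apply,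
    Finsupp.mapRange_single]
  rfl

/-- The boundary map descends to coinvariants. -/
noncomputable def coinvB (ρ : G →* AddAut M) (q : ℕ) :
    CoinvChain ρ (q + 1) →+ CoinvChain ρ q :=
  QuotientAddGroup.map _ _ (chainB G M q) (by
    rw [coinvRel, AddSubgroup.closure_le]
    rintro y ⟨n, x, rfl⟩
    show chainB G M q (x - chainAct ρ (q + 1) n x) ∈ coinvRel ρ q
    rw [map_sub]
    have : chainB G M q (chainAct ρ (q + 1) n x) = chainAct ρ q n (chainB G M q x) := by
      have := chainB_comm_act ρ q n
      exact congrFun (congrArg (fun (h : _ →+ _) => (h : _ → _)) this) x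
    rw [this]
    exact AddSubgroup.subset_closure ⟨n, chainB G M q x, rfl⟩)

/-- Cycles of the coinvariant chain complex. -/
noncomputable def hcycles (ρ : G →* AddAut M) : (q : ℕ) → AddSubgroup (CoinvChain ρ q)
  | 0 => ⊤
  | (n + 1) => (coinvB ρ n).ker

/-- Boundaries of the coinvariant chain complex. -/
noncomputable def hboundaries (ρ : G →* AddAut M) (q : ℕ) : AddSubgroup (CoinvChain ρ q) :=
  (coinvB ρ q).range

/-- The `q`-th group homology of `G` with coefficients in `M`, the action being given by
`ρ : G →* AddAut M`; defined via the homogeneous chain complex. -/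
def GroupHomology (ρ : G →* AddAut M) (q : ℕ) : Type :=
  hcycles ρ q ⧸ ((hboundaries ρ q ⊓ hcycles ρ q).addSubgroupOf (hcycles ρ q))

noncomputable instance (ρ : G →* AddAut M) (q : ℕ) : AddCommGroup (GroupHomology ρ q) := by
  unfold GroupHomology; infer_instance

/-- The chain-level map induced by a group homomorphism. -/
noncomputable def chainCores (φ : G' →* G) (M : Type) [AddCommGroup M] (q : ℕ) :
    ((Fin (q + 1) → G') →₀ M) →+ ((Fin (q + 1) → G) →₀ M) :=
  Finsupp.mapDomain.addMonoidHom fun g : Fin (q + 1) → G' => fun i => φ (g i)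

theorem chainCores_comm_B (φ : G' →* G) (q : ℕ) :
    (chainB G M q).comp (chainCores φ M (q + 1)) =
      (chainCores φ M q).comp (chainB G' M q) := by
  ext g m
  simp [chainB, chainCores, Finsupp.mapDomain_single, AddMonoidHom.finset_sum_apply]
  rfl

theorem chainCores_comm_act (φ : G' →* G) (ρ : G →* AddAut M) (ρ' : G' →* AddAut M)
    (hcomp : ∀ x, ρ' x = ρ (φ x)) (q : ℕ) (n : G') :
    (chainCores φ M q).comp (chainAct ρ' q n) =
      (chainAct ρ q (φ n)).comp (chainCores φ M q) := by
  ext g m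
  simp [chainAct, chainCores, Finsupp.mapDomain_single, Finsupp.mapRange_single, hcomp,
    map_mul]

/-- The chain-level map descends to coinvariants. -/
noncomputable def coinvCores (φ : G' →* G) (ρ : G →* AddAut M) (ρ' : G' →* AddAut M)
    (hcomp : ∀ x, ρ' x = ρ (φ x)) (q : ℕ) : CoinvChain ρ' q →+ CoinvChain ρ q :=
  QuotientAddGroup.map _ _ (chainCores φ M q) (by
    rw [coinvRel, AddSubgroup.closure_le]
    rintro y ⟨n, x, rfl⟩
    show chainCores φ M q (x - chainAct ρ' q n x) ∈ coinvRel ρ q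
    rw [map_sub]
    have : chainCores φ M q (chainAct ρ' q n x) =
        chainAct ρ q (φ n) (chainCores φ M q x) := by
      have := chainCores_comm_act φ ρ ρ' hcomp q n
      exact congrFun (congrArg (fun (h : _ →+ _) => (h : _ → _)) this) x
    rw [this]
    exact AddSubgroup.subset_closure ⟨φ n, chainCores φ M q x, rfl⟩)

theorem coinvCores_comm_B (φ : G' →* G) (ρ : G →* AddAut M) (ρ' : G' →* AddAut M)
    (hcomp : ∀ x, ρ' x = ρ (φ x)) (q : ℕ) (x : CoinvChain ρ' (q + 1)) :
    coinvB ρ q (coinvCores φ ρ ρ' hcomp (q + 1) x) =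
      coinvCores φ ρ ρ' hcomp q (coinvB ρ' q x) := by
  induction x using QuotientAddGroup.induction_on with
  | H z =>
    have hraw := DFunLike.congr_fun (chainCores_comm_B (M := M) φ q) z
    simp only [AddMonoidHom.comp_apply] at hraw
    show coinvB ρ q (coinvCores φ ρ ρ' hcomp (q + 1) (QuotientAddGroup.mk z)) =
      coinvCores φ ρ ρ' hcomp q (coinvB ρ' q (QuotientAddGroup.mk z))
    simp only [coinvB, coinvCores, QuotientAddGroup.map_mk]
    exact congrArg QuotientAddGroup.mk hraw

theorem coinvCores_mem_hcycles (φ : G' →* G) (ρ : G →* AddAut M) (ρ' : G' →* AddAut M)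
    (hcomp : ∀ x, ρ' x = ρ (φ x)) (q : ℕ) (x : CoinvChain ρ' q) (hx : x ∈ hcycles ρ' q) :
    coinvCores φ ρ ρ' hcomp q x ∈ hcycles ρ q := by
  match q with
  | 0 => trivial
  | (n + 1) =>
    show coinvB ρ n (coinvCores φ ρ ρ' hcomp (n + 1) x) = 0
    rw [coinvCores_comm_B φ ρ ρ' hcomp n x]
    have : coinvB ρ' n x = 0 := hx
    rw [this, map_zero]

/-- Cycle-level corestriction. -/
noncomputable def cycleCores (φ : G' →* G) (ρ : G →* AddAut M) (ρ' : G' →* AddAut M)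
    (hcomp : ∀ x, ρ' x = ρ (φ x)) (q : ℕ) : hcycles ρ' q →+ hcycles ρ q :=
  AddMonoidHom.codRestrict ((coinvCores φ ρ ρ' hcomp q).comp (hcycles ρ' q).subtype) _
    (fun x => coinvCores_mem_hcycles φ ρ ρ' hcomp q x x.2)

/-- The corestriction map in group homology along a homomorphism `φ : G' →* G`,
for compatible actions. -/
noncomputable def homologyCores (φ : G' →* G) (ρ : G →* AddAut M) (ρ' : G' →* AddAut M)
    (hcomp : ∀ x, ρ' x = ρ (φ x)) (q : ℕ) :
    GroupHomology ρ' q →+ GroupHomology ρ q :=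
  QuotientAddGroup.map _ _ (cycleCores φ ρ ρ' hcomp q) (by
    intro x hx
    have h1 : (x : CoinvChain ρ' q) ∈ hboundaries ρ' q ⊓ hcycles ρ' q := hx
    refine ⟨?_, (cycleCores φ ρ ρ' hcomp q x).2⟩
    obtain ⟨y, hy⟩ := h1.1
    exact ⟨coinvCores φ ρ ρ' hcomp (q + 1) y, by
      show coinvB ρ q _ = _
      rw [coinvCores_comm_B φ ρ ρ' hcomp q y, hy]
      rfl⟩)

end HomogeneousResolution

noncomputable section CharAux

abbrev Circ : Type := AddCircle (1 : ℚ)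

lemma zmodHom_ext {n : ℕ} [NeZero n] {B : Type*} [AddCommMonoid B] (ψ₁ ψ₂ : ZMod n →+ B)
    (h : ψ₁ 1 = ψ₂ 1) : ψ₁ = ψ₂ := by
  ext x
  have hx : ((x.val : ℕ) : ZMod n) = x := ZMod.natCast_rightInverse x
  have hx1 : x = x.val • (1 : ZMod n) := by
    rw [nsmul_eq_mul, mul_one, hx]
  rw [hx1, map_nsmul, map_nsmul, h]

def circGen (n : ℕ) : Circ := (((n : ℚ)⁻¹ : ℚ) : Circ)

lemma addOrderOf_circGen (n : ℕ) [NeZero n] : addOrderOf (circGen n) = n := by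
  haveI : Fact ((0:ℚ) < 1) := ⟨one_pos⟩
  have := AddCircle.addOrderOf_period_div (p := (1 : ℚ)) (n := n) (Nat.pos_of_ne_zero (NeZero.ne n))
  simpa [circGen, one_div] using this

lemma nsmul_circGen (n : ℕ) [NeZero n] : n • circGen n = 0 := by
  have h := addOrderOf_nsmul_eq_zero (circGen n)
  rwa [addOrderOf_circGen] at h

def circChar (n : ℕ) [NeZero n] : ZMod n →+ Circ :=
  ZMod.lift n ⟨zmultiplesHom Circ (circGen n), by
    simpa using nsmul_circGen n⟩

lemma circChar_int (n : ℕ) [NeZero n] (j : ℤ) : circChar n (j : ZMod n) = j • circGen n :=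
  ZMod.lift_coe _ _ _

lemma circChar_nat (n : ℕ) [NeZero n] (j : ℕ) :
    circChar n ((j : ℕ) : ZMod n) = j • circGen n := by
  have := circChar_int n (j : ℤ)
  push_cast at this
  simpa using this

lemma circChar_eq_zero_iff (n : ℕ) [NeZero n] (x : ZMod n) : circChar n x = 0 ↔ x = 0 := by
  constructor
  · intro h
    have hx : ((x.val : ℕ) : ZMod n) = x := ZMod.natCast_rightInverse x
    rw [← hx, circChar_nat] at h
    have hdvd : addOrderOf (circGen n) ∣ x.val := addOrderOf_dvd_of_nsmul_eq_zero h
    rw [addOrderOf_circGen] at hdvd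
    rw [← hx, ZMod.natCast_eq_zero_iff]
    exact hdvd
  · rintro rfl; simp

def zmodPair (n : ℕ) [NeZero n] : ZMod n →+ (ZMod n →+ Circ) where
  toFun m := (circChar n).comp (AddMonoidHom.mulLeft m)
  map_zero' := by ext x; simp
  map_add' a b := by ext x; simp [add_mul]

lemma zmodPair_apply (n : ℕ) [NeZero n] (m x : ZMod n) :
    zmodPair n m x = circChar n (m * x) := rfl

lemma zmodPair_injective (n : ℕ) [NeZero n] : Function.Injective (zmodPair n) := by
  rw [injective_iff_map_eq_zero]
  intro a ha
  have h1 : zmodPair n a 1 = 0 := by rw [ha]; rfl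
  rw [zmodPair_apply, mul_one] at h1
  exact (circChar_eq_zero_iff n a).mp h1

lemma zmodPair_surjective (n : ℕ) [NeZero n] : Function.Surjective (zmodPair n) := by
  intro ψ
  have hn0 : (n : ℚ) ≠ 0 := Nat.cast_ne_zero.mpr (NeZero.ne n)
  have hnpos : 0 < n := Nat.pos_of_ne_zero (NeZero.ne n)
  set u' : Circ := ψ 1 with hu'
  have hord : n • u' = 0 := by
    rw [hu', ← map_nsmul]
    have : n • (1 : ZMod n) = 0 := by
      rw [nsmul_eq_mul, mul_one]; exact ZMod.natCast_self n
    rw [this, map_zero]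
  have hfin : IsOfFinAddOrder u' := isOfFinAddOrder_iff_nsmul_eq_zero.mpr ⟨n, hnpos, hord⟩
  have hdpos : 0 < addOrderOf u' := hfin.addOrderOf_pos
  haveI : Fact ((0:ℚ) < 1) := ⟨one_pos⟩
  obtain ⟨m, hmlt, hgcd, hm⟩ := (AddCircle.addOrderOf_eq_pos_iff hdpos).mp rfl
  set d := addOrderOf u' with hd
  have hdvd : d ∣ n := addOrderOf_dvd_of_nsmul_eq_zero hord
  obtain ⟨c, hc⟩ := hdvd
  have hcpos : 0 < c := by
    rcases Nat.eq_zero_or_pos c with h | h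
    · exfalso; rw [h, Nat.mul_zero] at hc; omega
    · exact h
  refine ⟨((m * c : ℕ) : ZMod n), ?_⟩
  apply zmodHom_ext
  rw [zmodPair_apply, mul_one, circChar_nat]
  rw [← hu', ← hm]
  have : (m * c) • circGen n = (((m * c : ℕ) * (n : ℚ)⁻¹ : ℚ) : Circ) := by
    rw [circGen, ← QuotientAddGroup.mk_nsmul]
    congr 1
  rw [this]
  congr 1
  have hdq : (d : ℚ) ≠ 0 := Nat.cast_ne_zero.mpr (by omega)
  rw [hc]
  push_cast
  field_simp

def zmodCharEquiv (n : ℕ) [NeZero n] : ZMod n ≃+ (ZMod n →+ Circ) :=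
  AddEquiv.ofBijective (zmodPair n) ⟨zmodPair_injective n, zmodPair_surjective n⟩

end CharAux


open scoped DirectSum

noncomputable section CharAux2

-- assume aux is in same file later; re-declare minimal here for testing

/-- Direct sum over a fintype is additively equivalent to the product. -/
def dfinsuppAddEquivPi {ι : Type} [Fintype ι] [DecidableEq ι] (β : ι → Type*)
    [∀ i, AddCommMonoid (β i)] : (Π₀ i, β i) ≃+ (∀ i, β i) :=
  { DFinsupp.equivFunOnFintype with
    map_add' := fun a b => rfl }

/-- Precomposition with an additive equivalence. -/
def homPrecompEquiv {A B C : Type*} [AddCommMonoid A] [AddCommMonoid B] [AddCommMonoid C]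
    (e : A ≃+ B) : (B →+ C) ≃+ (A →+ C) where
  toFun ψ := ψ.comp e.toAddMonoidHom
  invFun ψ := ψ.comp e.symm.toAddMonoidHom
  left_inv ψ := by ext x; simp
  right_inv ψ := by ext x; simp
  map_add' ψ φ := rfl

/-- A finite abelian group is isomorphic to its character group. -/
lemma exists_charEquiv (M : Type) [AddCommGroup M] [Finite M] :
    Nonempty (M ≃+ (M →+ Circ)) := by
  classical
  obtain ⟨ι, hι, nf, hn, ⟨e⟩⟩ := AddCommGroup.equiv_directSum_zmod_of_finite' M
  haveI : ∀ i, NeZero (nf i) := fun i => ⟨by have h := hn i; omega⟩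
  let E1 : (∀ i, (ZMod (nf i) →+ Circ)) ≃+ ((⨁ i, ZMod (nf i)) →+ Circ) :=
    DFinsupp.liftAddHom
  let E2 : (∀ i, ZMod (nf i)) ≃+ (∀ i, (ZMod (nf i) →+ Circ)) :=
    AddEquiv.piCongrRight (fun i => zmodCharEquiv (nf i))
  let E3 : (⨁ i, ZMod (nf i)) ≃+ (∀ i, ZMod (nf i)) := dfinsuppAddEquivPi _
  let E4 : ((⨁ i, ZMod (nf i)) →+ Circ) ≃+ (M →+ Circ) := homPrecompEquiv e
  exact ⟨e.trans (E3.trans (E2.trans (E1.trans E4)))⟩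

/-- Extension of circle-valued characters from a subgroup. -/
lemma extend_char {B : Type} [AddCommGroup B] (S : AddSubgroup B) (φ : S →+ Circ) :
    ∃ ψ : B →+ Circ, ∀ s : S, ψ s = φ s := by
  have hs := CharacterModule.dual_surjective_of_injective (R := ℤ)
    (S.subtype.toIntLinearMap) S.subtype_injective
  obtain ⟨ψ, hψ⟩ := hs φ
  refine ⟨ψ, fun s => ?_⟩
  exact DFunLike.congr_fun hψ s

end CharAux2

section MainAux

variable {G : Type} [Group G] {M : Type} [AddCommGroup M]

/-- The diagonal action on a single chain, for the trivial action on coefficients. -/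
lemma chainAct_one_single (k : ℕ) (ng : G) (g : Fin (k + 1) → G) (m : M) :
    chainAct (1 : G →* AddAut M) k ng (Finsupp.single g m)
      = Finsupp.single (fun i => ng * g i) m := by
  simp [chainAct, Finsupp.mapDomain_single]
  rfl

lemma mk_single_act (k : ℕ) (ng : G) (g : Fin (k + 1) → G) (m : M) :
    (QuotientAddGroup.mk (Finsupp.single (fun i => ng * g i) m) :
        CoinvChain (1 : G →* AddAut M) k)
      = QuotientAddGroup.mk (Finsupp.single g m) := by
  symm
  rw [QuotientAddGroup.eq_iff_sub_mem]
  rw [← chainAct_one_single k ng g m]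
  exact AddSubgroup.subset_closure ⟨ng, Finsupp.single g m, rfl⟩

/-- Any character of a homology group extends to a character of the coinvariant chains
which kills all boundaries. -/
lemma exists_chainChar (ρ : G →* AddAut M) (q : ℕ)
    (χ0 : GroupHomology ρ q →+ Circ) :
    ∃ χ2 : CoinvChain ρ q →+ Circ,
      (∀ z : hcycles ρ q, χ2 z = χ0 (QuotientAddGroup.mk z)) ∧
      (∀ b ∈ hboundaries ρ q, χ2 b = 0) := by
  classical
  let π : CoinvChain ρ q →+ CoinvChain ρ q ⧸ hboundaries ρ q := QuotientAddGroup.mk' _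
  let fcy : ↥(hcycles ρ q) →+ CoinvChain ρ q ⧸ hboundaries ρ q :=
    π.comp (hcycles ρ q).subtype
  have hker : fcy.ker
      = ((hboundaries ρ q ⊓ hcycles ρ q).addSubgroupOf (hcycles ρ q)) := by
    ext z
    simp only [AddMonoidHom.mem_ker, AddSubgroup.mem_addSubgroupOf, AddSubgroup.mem_inf,
      fcy, π, AddMonoidHom.comp_apply, AddSubgroup.coe_subtype, QuotientAddGroup.mk'_apply,
      QuotientAddGroup.eq_zero_iff]
    exact ⟨fun h => ⟨h, z.2⟩, fun h => h.1⟩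
  let E1 := QuotientAddGroup.quotientKerEquivRange fcy
  let E2 := QuotientAddGroup.quotientAddEquivOfEq hker
  let χR : ↥fcy.range →+ Circ := χ0.comp (E2.toAddMonoidHom.comp E1.symm.toAddMonoidHom)
  obtain ⟨χQ, hχQ⟩ := extend_char fcy.range χR
  refine ⟨χQ.comp π, fun z => ?_, fun b hb => ?_⟩
  · have h2 : E1 (QuotientAddGroup.mk z) = ⟨fcy z, AddMonoidHom.mem_range.mpr ⟨z, rfl⟩⟩ :=
      Subtype.ext rfl
    have h3 : (χQ.comp π) (z : CoinvChain ρ q) = χQ (fcy z) := rfl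
    rw [h3]
    have h4 := hχQ ⟨fcy z, AddMonoidHom.mem_range.mpr ⟨z, rfl⟩⟩
    rw [h4]
    show χ0 (E2 (E1.symm (⟨fcy z, _⟩ : fcy.range))) = _
    rw [← h2, AddEquiv.symm_apply_apply]
    show χ0 (QuotientAddGroup.quotientAddEquivOfEq hker (QuotientAddGroup.mk z)) = _
    rw [QuotientAddGroup.quotientAddEquivOfEq_mk]
  · have hπb : π b = 0 := (QuotientAddGroup.eq_zero_iff b).mpr hb
    show χQ (π b) = 0
    rw [hπb, map_zero]

end MainAux

/-- If `M` is a finite abelian group, viewed as a trivial module over a group `N` and a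
subgroup `N' ≤ N`, the relevant integral homology groups are finitely generated, and the
restriction map `H^q(N, M) → H^q(N', M)` is zero, then the corestriction map
`H_q(N', M) → H_q(N, M)` induced by the inclusion is zero. -/
theorem homology_cores_zero_of_cohomology_res_zero
    (N : Type) [Group N] (N' : Subgroup N) (q : ℕ) (hq : 1 ≤ q)
    (M : Type) [AddCommGroup M] [Finite M]
    (hfgN : AddGroup.FG (GroupHomology (1 : N →* AddAut ℤ) q))
    (hfgN1 : AddGroup.FG (GroupHomology (1 : N →* AddAut ℤ) (q - 1)))
    (hfgN' : AddGroup.FG (GroupHomology (1 : (↥N') →* AddAut ℤ) q))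
    (hfgN'1 : AddGroup.FG (GroupHomology (1 : (↥N') →* AddAut ℤ) (q - 1)))
    (hres : ∀ x : GroupCohomology (1 : N →* AddAut M) q,
      cohomologyRes N'.subtype (1 : N →* AddAut M) (1 : (↥N') →* AddAut M)
        (fun _ => rfl) q x = 0) :
    ∀ y : GroupHomology (1 : (↥N') →* AddAut M) q,
      homologyCores N'.subtype (1 : N →* AddAut M) (1 : (↥N') →* AddAut M)
        (fun _ => rfl) q y = 0 := by
  classical
  obtain ⟨n, rfl⟩ : ∃ n, q = n + 1 := ⟨q - 1, by omega⟩
  obtain ⟨e⟩ := exists_charEquiv M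
  intro y
  by_contra hy
  obtain ⟨c, hc⟩ := CharacterModule.exists_character_apply_ne_zero_of_ne_zero hy
  let χ0 : GroupHomology (1 : N →* AddAut M) (n + 1) →+ Circ := c
  have hχ0 : χ0 (homologyCores N'.subtype (1 : N →* AddAut M) (1 : (↥N') →* AddAut M)
      (fun _ => rfl) (n + 1) y) ≠ 0 := hc
  obtain ⟨χ2, hPa, hPb⟩ := exists_chainChar (1 : N →* AddAut M) (n + 1) χ0
  set χbar : ((Fin (n + 2) → N) →₀ M) →+ Circ :=
    χ2.comp (QuotientAddGroup.mk' (coinvRel (1 : N →* AddAut M) (n + 1))) with hχbar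
  -- the cocycle
  set f : (Fin (n + 2) → N) → M :=
    (fun g => e.symm (χbar.comp (Finsupp.singleAddHom g))) with hf
  have key1 : ∀ (g : Fin (n + 2) → N) (m : M), χbar (Finsupp.single g m) = e (f g) m := by
    intro g m
    rw [hf]
    show _ = e (e.symm (χbar.comp (Finsupp.singleAddHom g))) m
    rw [e.apply_symm_apply]
    rfl
  have hfeq : f ∈ eqCochain (1 : N →* AddAut M) (n + 1) := by
    intro ng g
    have h1 : χbar.comp (Finsupp.singleAddHom fun i => ng * g i)
        = χbar.comp (Finsupp.singleAddHom g) := by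
      ext m
      show χ2 _ = χ2 _
      exact congrArg χ2 (mk_single_act (n + 1) ng g m)
    show e.symm (χbar.comp (Finsupp.singleAddHom fun i => ng * g i)) = _
    rw [h1]
    rfl
  have hbd : ∀ z : (Fin (n + 3) → N) →₀ M, χbar (chainB N M (n + 1) z) = 0 := by
    intro z
    have h2 : (QuotientAddGroup.mk (chainB N M (n + 1) z) :
        CoinvChain (1 : N →* AddAut M) (n + 1))
        = coinvB (1 : N →* AddAut M) (n + 1) (QuotientAddGroup.mk z) := rfl
    show χ2 (QuotientAddGroup.mk (chainB N M (n + 1) z)) = 0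
    rw [h2]
    exact hPb _ ⟨QuotientAddGroup.mk z, rfl⟩
  have hfker : f ∈ (cochainD N M (n + 1)).ker := by
    rw [AddMonoidHom.mem_ker]
    funext g
    apply e.injective
    rw [Pi.zero_apply, map_zero]
    show e (∑ i : Fin (n + 3), (-1 : ℤ) ^ (i : ℕ) • f (g ∘ i.succAbove)) = 0
    rw [map_sum]
    simp only [map_zsmul]
    ext m
    simp only [AddMonoidHom.finset_sum_apply, AddMonoidHom.smul_apply,
      AddMonoidHom.zero_apply]
    have hB : chainB N M (n + 1) (Finsupp.single g m)
        = ∑ i : Fin (n + 3), (-1 : ℤ) ^ (i : ℕ) • Finsupp.single (g ∘ i.succAbove) m := by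
      simp [chainB, AddMonoidHom.finset_sum_apply, Finsupp.mapDomain_single]
    have := hbd (Finsupp.single g m)
    rw [hB, map_sum] at this
    simp only [map_zsmul, key1] at this
    exact this
  set F : ↥(cocycles (1 : N →* AddAut M) (n + 1)) := ⟨f, hfeq, hfker⟩ with hF
  have hres' : QuotientAddGroup.mk (cocycleRes N'.subtype (1 : N →* AddAut M)
      (1 : (↥N') →* AddAut M) (fun _ => rfl) (n + 1) F) = 0 :=
    hres (QuotientAddGroup.mk F)
  have hmem := (QuotientAddGroup.eq_zero_iff _).mp hres'
  rw [AddSubgroup.mem_addSubgroupOf] at hmem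
  have hcb : cochainRes N'.subtype M (n + 1) f
      ∈ (eqCochain (1 : (↥N') →* AddAut M) n).map (cochainD (↥N') M n) := hmem.1
  obtain ⟨u, hu, hdu⟩ := hcb
  -- homology side
  obtain ⟨z, rfl⟩ := QuotientAddGroup.mk_surjective y
  obtain ⟨w, hw⟩ := QuotientAddGroup.mk_surjective
    (z : CoinvChain (1 : (↥N') →* AddAut M) (n + 1))
  have hcores : homologyCores N'.subtype (1 : N →* AddAut M) (1 : (↥N') →* AddAut M)
      (fun _ => rfl) (n + 1) (QuotientAddGroup.mk z)
      = QuotientAddGroup.mk (cycleCores N'.subtype (1 : N →* AddAut M)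
          (1 : (↥N') →* AddAut M) (fun _ => rfl) (n + 1) z) := rfl
  rw [hcores, ← hPa] at hχ0
  have hval : ((cycleCores N'.subtype (1 : N →* AddAut M) (1 : (↥N') →* AddAut M)
        (fun _ => rfl) (n + 1) z : ↥(hcycles (1 : N →* AddAut M) (n + 1))) :
        CoinvChain (1 : N →* AddAut M) (n + 1))
      = QuotientAddGroup.mk (chainCores N'.subtype M (n + 1) w) := by
    show coinvCores N'.subtype (1 : N →* AddAut M) (1 : (↥N') →* AddAut M)
      (fun _ => rfl) (n + 1) ((z : ↥(hcycles (1 : (↥N') →* AddAut M) (n + 1))) :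
        CoinvChain (1 : (↥N') →* AddAut M) (n + 1)) = _
    rw [← hw]
    rfl
  rw [hval] at hχ0
  apply hχ0
  show χbar (chainCores N'.subtype M (n + 1) w) = 0
  -- pairing identities
  have hPq : χbar.comp (chainCores N'.subtype M (n + 1))
      = Finsupp.liftAddHom (fun g => e (cochainRes N'.subtype M (n + 1) f g)) := by
    apply Finsupp.addHom_ext
    intro g m
    rw [AddMonoidHom.comp_apply]
    show χbar (Finsupp.mapDomain _ (Finsupp.single g m)) = _
    rw [Finsupp.mapDomain_single, Finsupp.liftAddHom_apply_single]
    exact key1 _ m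
  have hadj : Finsupp.liftAddHom (fun g => e ((cochainD (↥N') M n) u g))
      = (Finsupp.liftAddHom (fun g => e (u g))).comp (chainB (↥N') M n) := by
    apply Finsupp.addHom_ext
    intro g m
    rw [Finsupp.liftAddHom_apply_single, AddMonoidHom.comp_apply]
    have hB' : chainB (↥N') M n (Finsupp.single g m)
        = ∑ i : Fin (n + 2), (-1 : ℤ) ^ (i : ℕ) • Finsupp.single (g ∘ i.succAbove) m := by
      simp [chainB, AddMonoidHom.finset_sum_apply, Finsupp.mapDomain_single]
    have hL : e ((cochainD (↥N') M n) u g)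
        = ∑ i : Fin (n + 2), (-1 : ℤ) ^ (i : ℕ) • e (u (g ∘ i.succAbove)) := by
      show e (∑ i : Fin (n + 2), (-1 : ℤ) ^ (i : ℕ) • u (g ∘ i.succAbove)) = _
      rw [map_sum]
      simp only [map_zsmul]
    rw [hL, hB', map_sum]
    simp only [map_zsmul, Finsupp.liftAddHom_apply_single, AddMonoidHom.finset_sum_apply,
      AddMonoidHom.smul_apply]
  have hvan : ∀ x ∈ coinvRel (1 : (↥N') →* AddAut M) n,
      Finsupp.liftAddHom (fun g => e (u g)) x = 0 := by
    have hle : coinvRel (1 : (↥N') →* AddAut M) n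
        ≤ (Finsupp.liftAddHom (fun g => e (u g))).ker := by
      rw [coinvRel, AddSubgroup.closure_le]
      rintro x ⟨ng, x0, rfl⟩
      have hcomm : (Finsupp.liftAddHom (fun g => e (u g))).comp
          (chainAct (1 : (↥N') →* AddAut M) n ng)
          = Finsupp.liftAddHom (fun g => e (u g)) := by
        apply Finsupp.addHom_ext
        intro g m
        rw [AddMonoidHom.comp_apply, chainAct_one_single, Finsupp.liftAddHom_apply_single,
          Finsupp.liftAddHom_apply_single]
        have h5 := hu ng g
        rw [h5]
        rfl
      have h6 := DFunLike.congr_fun hcomm x0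
      rw [AddMonoidHom.comp_apply] at h6
      rw [SetLike.mem_coe, AddMonoidHom.mem_ker, map_sub, h6, sub_self]
    exact fun x hx => hle hx
  have hcyc : chainB (↥N') M n w ∈ coinvRel (1 : (↥N') →* AddAut M) n := by
    have h0 : coinvB (1 : (↥N') →* AddAut M) n
        ((z : ↥(hcycles (1 : (↥N') →* AddAut M) (n + 1))) :
          CoinvChain (1 : (↥N') →* AddAut M) (n + 1)) = 0 := z.2
    rw [← hw] at h0
    exact (QuotientAddGroup.eq_zero_iff _).mp h0
  have e1 := DFunLike.congr_fun hPq w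
  rw [AddMonoidHom.comp_apply] at e1
  rw [e1]
  have e2 : Finsupp.liftAddHom (fun g => e (cochainRes N'.subtype M (n + 1) f g)) w
      = Finsupp.liftAddHom (fun g => e ((cochainD (↥N') M n) u g)) w := by
    simp only [hdu]
  rw [e2, DFunLike.congr_fun hadj w, AddMonoidHom.comp_apply]
  exact hvan _ hcyc
end
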